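/- Let p̂(X) ∈ F[X] be any polynomial with Σ_{x ∈ H} p̂(x) = 0, and let c₀, c₁ ∈ F be arbitrary. Then there exist polynomials U(X) ∈ F[X] of degree strictly less than n and h(X) ∈ F[X] such that, setting Û(X) = U(X) + (c₀ + c₁·X)·(X^n − 1), one has the polynomial identity Û(g·X) − Û(X) = p̂(X) + h(X)·(X^n − 1). -/

import Mathlib

open Polynomial

/-- **Existence of the randomized coboundary witness.**
Let `p̂(X)` be any polynomial with `∑_{x ∈ H} p̂(x) = 0` and `c₀, c₁ ∈ F` arbitrary. Then
there exist polynomials `U(X)` of degree `< n` and `h(X)` such that, setting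
`Û(X) = U(X) + (c₀ + c₁·X)·(X^n - 1)`, one has
`Û(g·X) - Û(X) = p̂(X) + h(X)·(X^n - 1)`.
Here `H = {g^0, …, g^(n-1)}` for a primitive `n`-th root of unity `g` in a field `F` in
which `n` is nonzero. -/
theorem randomized_coboundary_witness {F : Type*} [Field F] (n : ℕ) (hn0 : 0 < n)
    (hn : (n : F) ≠ 0) (g : F) (hg : IsPrimitiveRoot g n)
    (p : F[X]) (hp : (∑ i ∈ Finset.range n, p.eval (g ^ i)) = 0) (c₀ c₁ : F) :
    ∃ U h : F[X], U.degree < n ∧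
      (U + (C c₀ + C c₁ * X) * (X ^ n - 1)).comp (C g * X)
          - (U + (C c₀ + C c₁ * X) * (X ^ n - 1)) =
        p + h * (X ^ n - 1) := by
  set D : F[X] := X ^ n - 1 with hDdef
  have hD1 : D = X ^ n - C 1 := by simp [hDdef]
  have hmonic : D.Monic := by rw [hD1]; exact monic_X_pow_sub_C 1 hn0.ne'
  set r : F[X] := p %ₘ D with hrdef
  set q : F[X] := p /ₘ D with hqdef
  have hpq : r + D * q = p := modByMonic_add_div p D
  have hdegD : D.degree = n := by rw [hD1]; exact degree_X_pow_sub_C hn0 1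
  have hrdeg : r.degree < n := by
    have := degree_modByMonic_lt p hmonic; rwa [hdegD] at this
  have hrnat : r.natDegree < n := by
    rcases eq_or_ne r 0 with h | h
    · simpa [h] using hn0
    · exact (natDegree_lt_iff_degree_lt h).mpr (by simpa using hrdeg)
  -- evaluation of D at powers of g is 0
  have hDeval : ∀ i : ℕ, D.eval (g ^ i) = 0 := by
    intro i
    have : (g ^ i) ^ n = 1 := by
      rw [← pow_mul, mul_comm, pow_mul, hg.pow_eq_one, one_pow]
    simp [hDdef, this]
  -- coeff 0 of r is 0
  have hr0 : r.coeff 0 = 0 := by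
    have hsum : (∑ i ∈ Finset.range n, r.eval (g ^ i)) = 0 := by
      rw [← hp]
      refine Finset.sum_congr rfl fun i _ => ?_
      conv_rhs => rw [← hpq]
      simp [hDeval i]
    have key : (∑ i ∈ Finset.range n, r.eval (g ^ i)) = (n : F) * r.coeff 0 := by
      have : ∀ i, r.eval (g ^ i) = ∑ k ∈ Finset.range n, r.coeff k * (g ^ k) ^ i := by
        intro i
        rw [eval_eq_sum_range' hrnat]
        refine Finset.sum_congr rfl fun k _ => ?_
        rw [← pow_mul, ← pow_mul, mul_comm i k]
      simp_rw [this]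
      rw [Finset.sum_comm]
      rw [Finset.sum_eq_single 0]
      · simp [mul_comm]
      · intro k hk hk0
        rw [← Finset.mul_sum, geom_sum_eq (hg.pow_ne_one_of_pos_of_lt hk0 (Finset.mem_range.mp hk)), ← pow_mul, mul_comm k n, pow_mul, hg.pow_eq_one]
        simp
      · intro h; simp at h; omega
    rw [hsum] at key
    exact (mul_eq_zero.mp key.symm).resolve_left hn
  -- define U
  set U : F[X] := ∑ k ∈ Finset.Ico 1 n, C (r.coeff k / (g ^ k - 1)) * X ^ k with hUdef
  have hgk : ∀ k ∈ Finset.Ico 1 n, g ^ k - 1 ≠ 0 := by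
    intro k hk
    obtain ⟨h1, h2⟩ := Finset.mem_Ico.mp hk
    exact sub_ne_zero.mpr (hg.pow_ne_one_of_pos_of_lt (by omega) h2)
  have hU : U.comp (C g * X) - U = r := by
    rw [hUdef]
    have hcomp : (∑ k ∈ Finset.Ico 1 n, C (r.coeff k / (g ^ k - 1)) * X ^ k).comp (C g * X)
        = ∑ k ∈ Finset.Ico 1 n, C (r.coeff k / (g ^ k - 1) * g ^ k) * X ^ k := by
      rw [comp, eval₂_finset_sum]
      refine Finset.sum_congr rfl fun k _ => ?_
      rw [eval₂_mul, eval₂_C, eval₂_X_pow, mul_pow, ← C_pow, ← mul_assoc, ← C_mul]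
    rw [hcomp, ← Finset.sum_sub_distrib]
    have : ∀ k ∈ Finset.Ico 1 n,
        C (r.coeff k / (g ^ k - 1) * g ^ k) * X ^ k - C (r.coeff k / (g ^ k - 1)) * X ^ k
        = C (r.coeff k) * X ^ k := by
      intro k hk
      rw [← sub_mul, ← C_sub, ← mul_sub_one, div_mul_cancel₀ _ (hgk k hk)]
    rw [Finset.sum_congr rfl this]
    conv_rhs => rw [r.as_sum_range' n hrnat]
    rw [Finset.range_eq_Ico, Finset.sum_eq_sum_Ico_succ_bot hn0, hr0]
    simp [C_mul_X_pow_eq_monomial]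
  have hUdeg : U.degree < n := by
    refine lt_of_le_of_lt (degree_sum_le _ _) ?_
    rw [Finset.sup_lt_iff (by exact_mod_cast WithBot.bot_lt_coe (n:ℕ))]
    intro k hk
    have h1 : (C (r.coeff k / (g ^ k - 1)) * X ^ k).degree ≤ (k : WithBot ℕ) := by
      refine le_trans (degree_mul_le _ _) ?_
      rw [degree_X_pow]
      calc (C (r.coeff k / (g ^ k - 1))).degree + (k : WithBot ℕ)
          ≤ 0 + (k : WithBot ℕ) := add_le_add degree_C_le le_rfl
        _ = (k : WithBot ℕ) := zero_add _
    have h2 : (k : WithBot ℕ) < (n : WithBot ℕ) := by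
      exact_mod_cast (Finset.mem_Ico.mp hk).2
    exact lt_of_le_of_lt h1 h2
  set B : F[X] := C c₀ + C c₁ * X with hBdef
  refine ⟨U, B.comp (C g * X) - B - q, hUdeg, ?_⟩
  have hDcomp : D.comp (C g * X) = D := by
    rw [hDdef, sub_comp, one_comp, pow_comp, X_comp, mul_pow, ← C_pow, hg.pow_eq_one, C_1, one_mul]
  rw [add_comp, mul_comp, hDcomp]
  conv_rhs => rw [← hpq]
  linear_combination hU
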